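/- Define D: ℕ → Finset ℕ by D(2) = {0}, D(3) = {1}, D(4) = {1}, D(5) = {1}, D(6) = {2}, and for t ≥ 7, D(t) = (D(t−3) + 1) ∪ (D(t−5) + 2) (elementwise shifts). Define f(t) as 5, 2, 4, 1, 3 according to t ≡ 0, 1, 2, 3, 4 (mod 5). Then for every t ≥ 2, D(t) equals the set of integers in the closed interval [⌊t/3⌋, (2t − f(t))/5]. -/
import Mathlib


/-- The set of sphere dimensions for the matching complex of `P_{3,t}`:
`D 2 = {0}`, `D 3 = D 4 = D 5 = {1}`, `D 6 = {2}`, and for `t ≥ 7`,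
`D t = (D (t−3) + 1) ∪ (D (t−5) + 2)` (elementwise shifts). -/
def D : ℕ → Finset ℕ
  | 2 => {0}
  | 3 => {1}
  | 4 => {1}
  | 5 => {1}
  | 6 => {2}
  | t + 7 => (D (t + 4)).image (· + 1) ∪ (D (t + 2)).image (· + 2)
  | _ => ∅

/-- `f t` is `5, 2, 4, 1, 3` according as `t ≡ 0, 1, 2, 3, 4 (mod 5)`. -/
def fmod (t : ℕ) : ℕ :=
  match t % 5 with
  | 0 => 5
  | 1 => 2
  | 2 => 4
  | 3 => 1
  | _ => 3

lemma fmod_spec (t : ℕ) :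
    (t % 5 = 0 ∧ fmod t = 5) ∨ (t % 5 = 1 ∧ fmod t = 2) ∨ (t % 5 = 2 ∧ fmod t = 4) ∨
      (t % 5 = 3 ∧ fmod t = 1) ∨ (t % 5 = 4 ∧ fmod t = 3) := by
  have h : t % 5 = 0 ∨ t % 5 = 1 ∨ t % 5 = 2 ∨ t % 5 = 3 ∨ t % 5 = 4 := by omega
  rcases h with h | h | h | h | h <;> simp [fmod, h]

lemma mem_D : ∀ t : ℕ, 2 ≤ t → ∀ d : ℕ,
    (d ∈ D t ↔ t / 3 ≤ d ∧ 5 * d ≤ 2 * t - fmod t) := by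
  intro t
  induction t using Nat.strong_induction_on with
  | _ t ih =>
    match t, ih with
    | 0, _ => intro h; exact absurd h (by norm_num)
    | 1, _ => intro h; exact absurd h (by norm_num)
    | 2, _ => intro _ d; simp [D]; have := fmod_spec 2; omega
    | 3, _ => intro _ d; simp [D]; have := fmod_spec 3; omega
    | 4, _ => intro _ d; simp [D]; have := fmod_spec 4; omega
    | 5, _ => intro _ d; simp [D]; have := fmod_spec 5; omega
    | 6, _ => intro _ d; simp [D]; have := fmod_spec 6; omega
    | (t + 7), ih =>
      intro _ d
      have h1 := ih (t + 4) (by omega) (by omega)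
      have h2 := ih (t + 2) (by omega) (by omega)
      have e1 := fmod_spec (t + 7)
      have e2 := fmod_spec (t + 4)
      have e3 := fmod_spec (t + 2)
      simp only [D, Finset.mem_union, Finset.mem_image, h1, h2]
      constructor
      · rintro (⟨r, ⟨a, b⟩, rfl⟩ | ⟨r, ⟨a, b⟩, rfl⟩) <;> omega
      · rintro ⟨a, b⟩
        by_cases h : (t + 4) / 3 ≤ d - 1 ∧ 5 * (d - 1) ≤ 2 * (t + 4) - fmod (t + 4)
        · exact Or.inl ⟨d - 1, h, by omega⟩
        · exact Or.inr ⟨d - 2, ⟨by omega, by omega⟩, by omega⟩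

/-- For every `t ≥ 2`, `D t` is exactly the set of integers `d` with
`⌊t/3⌋ ≤ d` and `5d ≤ 2t − f(t)`. -/
theorem D_eq_interval (t : ℕ) (ht : 2 ≤ t) :
    (D t : Set ℕ) = {d : ℕ | t / 3 ≤ d ∧ 5 * d ≤ 2 * t - fmod t} := by
  ext d
  simp only [Finset.coe_sort_coe, Set.mem_setOf_eq, Finset.mem_coe]
  exact mem_D t ht d
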